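/- Let X be a sequential topological space. Suppose there is a countable collection {A_n : n ∈ ℕ} of closed nowhere-dense subsets of X whose union is X, such that for every sequence (x_i) of points of X converging to a point x there is n ∈ ℕ with {x_i : i ∈ ℕ} ∪ {x} ⊆ A_n. Then X has property (B). -/

import Mathlib

/-- A topological space `X` has property (B) if it can be covered by countably many closed
nowhere-dense sets `A n` such that every compact subset of `X` is contained in some `A n`. -/
def PropertyB (X : Type*) [TopologicalSpace X] : Prop :=
  ∃ A : ℕ → Set X,
    (∀ n, IsClosed (A n)) ∧ (∀ n, interior (A n) = ∅) ∧
    (⋃ n, A n) = Set.univ ∧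
    ∀ C : Set X, IsCompact C → ∃ n, C ⊆ A n

/-- Finite unions of closed nowhere dense sets are nowhere dense. -/
lemma interior_union_empty {X : Type*} [TopologicalSpace X] {s t : Set X}
    (hs : IsClosed s) (hsi : interior s = ∅) (hti : interior t = ∅) :
    interior (s ∪ t) = ∅ := by
  have h1 : interior (s ∪ t) \ s ⊆ interior t := by
    apply interior_maximal
    · intro z hz
      rcases interior_subset hz.1 with h | h
      · exact absurd h hz.2
      · exact h
    · exact isOpen_interior.sdiff hs
  rw [hti] at h1
  have h2 : interior (s ∪ t) ⊆ s := fun z hz => by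
    by_contra hzs
    exact h1 ⟨hz, hzs⟩
  have := interior_maximal h2 isOpen_interior
  rw [hsi] at this
  exact Set.subset_empty_iff.mp this

lemma interior_accumulate_empty {X : Type*} [TopologicalSpace X] (A : ℕ → Set X)
    (hclosed : ∀ n, IsClosed (A n)) (hnwd : ∀ n, interior (A n) = ∅) (n : ℕ) :
    interior (Set.accumulate A n) = ∅ := by
  induction n with
  | zero =>
      have : Set.accumulate A 0 = A 0 := by
        ext z; simp [Set.accumulate]
      rw [this]; exact hnwd 0
  | succ n ih =>
      have hacc : Set.accumulate A (n + 1) = Set.accumulate A n ∪ A (n + 1) := by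
        ext z
        simp only [Set.accumulate, Set.mem_iUnion, Set.mem_union]
        constructor
        · rintro ⟨y, hy, hz⟩
          rcases Nat.le_add_one_iff.mp hy with h | h
          · exact Or.inl ⟨y, h, hz⟩
          · exact Or.inr (h ▸ hz)
        · rintro (⟨y, hy, hz⟩ | hz)
          · exact ⟨y, le_trans hy (Nat.le_succ n), hz⟩
          · exact ⟨n + 1, le_refl _, hz⟩
      rw [hacc]
      refine interior_union_empty ?_ ih (hnwd (n + 1))
      exact (Set.finite_Iic n).isClosed_biUnion fun i _ => hclosed i

/-- Let `X` be a sequential space. Suppose `{A n : n ∈ ℕ}` is a countable collection of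
closed nowhere-dense subsets covering `X` such that every convergent sequence, together
with its limit, is contained in some `A n`. Then `X` has property (B). -/
theorem statement17 (X : Type*) [TopologicalSpace X] [SequentialSpace X]
    (A : ℕ → Set X)
    (hclosed : ∀ n, IsClosed (A n)) (hnwd : ∀ n, interior (A n) = ∅)
    (hcover : (⋃ n, A n) = Set.univ)
    (hseq : ∀ (x : ℕ → X) (l : X), Filter.Tendsto x Filter.atTop (nhds l) →
      ∃ n, Set.range x ∪ {l} ⊆ A n) :
    PropertyB X := by
  refine ⟨Set.accumulate A, ?_, ?_, ?_, ?_⟩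
  · intro n
    exact (Set.finite_Iic n).isClosed_biUnion fun i _ => hclosed i
  · exact interior_accumulate_empty A hclosed hnwd
  · rw [Set.iUnion_accumulate, hcover]
  · intro C hC
    by_contra hcon
    push_neg at hcon
    -- choose points x n ∈ C \ Accumulate A n
    have hx : ∀ n, ∃ z, z ∈ C ∧ z ∉ Set.accumulate A n := by
      intro n
      rcases Set.not_subset.mp (hcon n) with ⟨z, hzC, hz⟩
      exact ⟨z, hzC, hz⟩
    choose x hxC hxA using hx
    -- key lemma: no subsequence of x along a map tending to infinity converges
    have key : ∀ (k : ℕ → ℕ) (l : X), Filter.Tendsto k Filter.atTop Filter.atTop →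
        Filter.Tendsto (fun i => x (k i)) Filter.atTop (nhds l) → False := by
      intro k l hk hxk
      obtain ⟨m, hm⟩ := hseq (fun i => x (k i)) l hxk
      obtain ⟨i, hi⟩ := (hk.eventually_ge_atTop m).exists
      have : x (k i) ∈ A m := hm (Or.inl ⟨i, rfl⟩)
      exact hxA (k i)
        (Set.accumulate_subset_accumulate hi (Set.subset_accumulate this))
    -- the sets Z n are closed
    set Z : ℕ → Set X := fun n => ⋃ k, ⋃ (_ : n ≤ k), closure {x k} with hZ
    have hZclosed : ∀ n, IsClosed (Z n) := by
      intro n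
      apply IsSeqClosed.isClosed
      intro y l hy hl
      by_cases h2 : ∃ k, n ≤ k ∧ ∃ᶠ i in Filter.atTop, y i ∈ closure {x k}
      · obtain ⟨k, hk, hfreq⟩ := h2
        have : l ∈ closure (closure {x k}) :=
          mem_closure_of_frequently_of_tendsto hfreq hl
        rw [closure_closure] at this
        exact Set.mem_iUnion.mpr ⟨k, Set.mem_iUnion.mpr ⟨hk, this⟩⟩
      · exfalso
        push_neg at h2
        have hy' : ∀ i, ∃ k, n ≤ k ∧ y i ∈ closure {x k} := by
          intro i
          have := hy i
          simp only [hZ, Set.mem_iUnion] at this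
          obtain ⟨k, hk, hmem⟩ := this
          exact ⟨k, hk, hmem⟩
        choose k hk hyk using hy'
        -- k tends to infinity
        have hktop : Filter.Tendsto k Filter.atTop Filter.atTop := by
          rw [Filter.tendsto_atTop]
          intro K
          have hev : ∀ᶠ i in Filter.atTop, ∀ j ∈ Finset.Ico n K, y i ∉ closure {x j} := by
            rw [Filter.eventually_all_finset]
            intro j hj
            rw [Finset.mem_Ico] at hj
            have := h2 j hj.1
            exact this
          filter_upwards [hev] with i hi
          by_contra hKi
          push_neg at hKi
          exact hi (k i) (Finset.mem_Ico.mpr ⟨hk i, hKi⟩) (hyk i)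
        -- x ∘ k tends to l
        have hxkl : Filter.Tendsto (fun i => x (k i)) Filter.atTop (nhds l) := by
          rw [tendsto_nhds]
          intro U hU hlU
          filter_upwards [hl.eventually (hU.mem_nhds hlU)] with i hi
          rcases _root_.mem_closure_iff.mp (hyk i) U hU hi with ⟨z, hzU, hz⟩
          rw [Set.mem_singleton_iff] at hz
          exact show x (k i) ∈ U from hz ▸ hzU
        exact key k l hktop hxkl
    -- the Z n meet C in a common point
    have hnonempty : ∃ l, l ∈ C ∧ ∀ n, l ∈ Z n := by
      by_contra hcon2
      push_neg at hcon2
      have hcov : C ⊆ ⋃ n, (Z n)ᶜ := by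
        intro z hz
        obtain ⟨n, hn⟩ := hcon2 z hz
        exact Set.mem_iUnion.mpr ⟨n, hn⟩
      have hdir : Directed (· ⊆ ·) (fun n => (Z n)ᶜ) := by
        intro a b
        refine ⟨max a b, Set.compl_subset_compl.mpr ?_, Set.compl_subset_compl.mpr ?_⟩
        · exact Set.iUnion₂_subset fun k hk =>
            Set.subset_iUnion₂ (s := fun k _ => closure {x k}) k (le_trans (le_max_left a b) hk)
        · exact Set.iUnion₂_subset fun k hk =>
            Set.subset_iUnion₂ (s := fun k _ => closure {x k}) k (le_trans (le_max_right a b) hk)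
      obtain ⟨N, hN⟩ := hC.elim_directed_cover _ (fun n => (hZclosed n).isOpen_compl) hcov hdir
      have hxN : x N ∈ Z N :=
        Set.mem_iUnion.mpr ⟨N, Set.mem_iUnion.mpr ⟨le_refl N, subset_closure rfl⟩⟩
      exact (hN (hxC N)) hxN
    obtain ⟨l, _, hlZ⟩ := hnonempty
    -- for every n there is k ≥ n with l ∈ closure {x k}
    have hcl : ∀ n, ∃ k, n ≤ k ∧ l ∈ closure {x k} := by
      intro n
      have := hlZ n
      simp only [hZ, Set.mem_iUnion] at this
      obtain ⟨k, hk, hmem⟩ := this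
      exact ⟨k, hk, hmem⟩
    choose k hk hlk using hcl
    have hktop : Filter.Tendsto k Filter.atTop Filter.atTop :=
      Filter.tendsto_atTop_mono hk Filter.tendsto_id
    have hxkl : Filter.Tendsto (fun n => x (k n)) Filter.atTop (nhds l) := by
      rw [tendsto_nhds]
      intro U hU hlU
      refine Filter.Eventually.of_forall fun n => ?_
      rcases _root_.mem_closure_iff.mp (hlk n) U hU hlU with ⟨z, hzU, hz⟩
      rw [Set.mem_singleton_iff] at hz
      exact show x (k n) ∈ U from hz ▸ hzU
    exact key k l hktop hxkl
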